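/- If in a feasible non-preemptive schedule the job l attains the makespan and at every integer time t < S l exactly m jobs are running (i.e., #{j : S j ≤ t < S j + p j} = m), then m times the makespan is at most ∑_j p j + (m − 1) · p l. -/
import Mathlib


def IsChainTo {n : ℕ} (P : Fin n → Finset (Fin n)) (k : Fin n) (L : List (Fin n)) : Prop :=
  L ≠ [] ∧ L.getLast? = some k ∧
    (∀ h, L.head? = some h → P h = ∅) ∧
    L.Chain' (fun a b => a ∈ P b)

/-- Value of a chain: `t 1 = r j₁ + p j₁`, `t (q+1) = max (r j_{q+1}) (t q) + p j_{q+1}`. -/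
def chainValue {n : ℕ} (r p : Fin n → ℕ) : List (Fin n) → ℕ
  | [] => 0
  | j :: rest => rest.foldl (fun t j' => max (r j') t + p j') (r j + p j)

/-- Minimal chain length of job `k`: minimum value over all chains to `k`. -/
noncomputable def mc {n : ℕ} (P : Fin n → Finset (Fin n)) (r p : Fin n → ℕ) (k : Fin n) : ℕ :=
  sInf {v | ∃ L, IsChainTo P k L ∧ chainValue r p L = v}

/-- A valid non-preemptive schedule: jobs on the same machine occupy
disjoint half-open intervals `[S j, S j + p j)`. -/
def ValidSchedule {n m : ℕ} (p : Fin n → ℕ) (S : Fin n → ℕ) (M : Fin n → Fin m) : Prop :=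
  ∀ i j : Fin n, i ≠ j → M i = M j →
    ∀ t : ℕ, ¬ ((S i ≤ t ∧ t < S i + p i) ∧ (S j ≤ t ∧ t < S j + p j))

/-- Feasibility: release dates respected and each job with predecessors is
preceded by at least one of them (OR-precedence). -/
def FeasibleSchedule {n : ℕ} (P : Fin n → Finset (Fin n)) (r p S : Fin n → ℕ) : Prop :=
  (∀ j, r j ≤ S j) ∧ ∀ j, P j ≠ ∅ → ∃ i ∈ P j, S i + p i ≤ S j

def makespan {n : ℕ} (p S : Fin n → ℕ) : ℕ := Finset.univ.sup fun j => S j + p j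

/-- Non-delay: whenever some job is available but not yet started at an integer time `t`
before the makespan, all `m` machines are busy at time `t`. -/
def NonDelay {n : ℕ} (m : ℕ) (P : Fin n → Finset (Fin n)) (r p S : Fin n → ℕ) : Prop :=
  ∀ t : ℕ, t < makespan p S →
    (∃ j : Fin n, t < S j ∧ r j ≤ t ∧ (P j = ∅ ∨ ∃ i ∈ P j, S i + p i ≤ t)) →
    (Finset.univ.filter fun j' : Fin n => S j' ≤ t ∧ t < S j' + p j').card = m

/-- If job `l` attains the makespan and at every integer time `t < S l` exactly `m` jobs
are running, then `m` times the makespan is at most `∑ p j + (m - 1) * p l`. -/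
theorem makespan_bound_no_idle {n m : ℕ} (hm : 1 ≤ m)
    (P : Fin n → Finset (Fin n)) (p r S : Fin n → ℕ) (M : Fin n → Fin m)
    (hp : ∀ j, 1 ≤ p j)
    (hvalid : ValidSchedule p S M)
    (hfeas : FeasibleSchedule P r p S)
    (l : Fin n) (hl : S l + p l = makespan p S)
    (hbusy : ∀ t : ℕ, t < S l →
      (Finset.univ.filter fun j : Fin n => S j ≤ t ∧ t < S j + p j).card = m) :
    m * makespan p S ≤ ∑ j, p j + (m - 1) * p l := by
  classical
  have h1 : ∑ t ∈ Finset.range (S l),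
      ((Finset.univ.filter fun j : Fin n => S j ≤ t ∧ t < S j + p j).card) = m * S l := by
    rw [Finset.sum_congr rfl (fun t ht => hbusy t (Finset.mem_range.mp ht))]
    simp [mul_comm]
  have h2 : ∑ t ∈ Finset.range (S l),
      ((Finset.univ.filter fun j : Fin n => S j ≤ t ∧ t < S j + p j).card)
      = ∑ j : Fin n, ((Finset.range (S l)).filter fun t => S j ≤ t ∧ t < S j + p j).card := by
    simp_rw [Finset.card_filter]
    exact Finset.sum_comm
  have hle : ∀ j : Fin n,
      ((Finset.range (S l)).filter fun t => S j ≤ t ∧ t < S j + p j).card ≤ p j := by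
    intro j
    have hsub : ((Finset.range (S l)).filter fun t => S j ≤ t ∧ t < S j + p j)
        ⊆ Finset.Ico (S j) (S j + p j) := by
      intro t ht
      simp only [Finset.mem_filter] at ht
      exact Finset.mem_Ico.mpr ht.2
    calc _ ≤ (Finset.Ico (S j) (S j + p j)).card := Finset.card_le_card hsub
      _ = p j := by simp
  have hl0 : ((Finset.range (S l)).filter fun t => S l ≤ t ∧ t < S l + p l).card = 0 := by
    rw [Finset.card_eq_zero]
    apply Finset.filter_false_of_mem
    intro t ht
    simp only [Finset.mem_range] at ht
    rintro ⟨h1', _⟩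
    omega
  have key : m * S l + p l ≤ ∑ j, p j := by
    have hsum : ∑ j : Fin n, ((Finset.range (S l)).filter fun t => S j ≤ t ∧ t < S j + p j).card
        ≤ ∑ j, p j - p l := by
      have hsplit : ∑ j : Fin n, ((Finset.range (S l)).filter fun t => S j ≤ t ∧ t < S j + p j).card
          = ∑ j ∈ Finset.univ.erase l,
            ((Finset.range (S l)).filter fun t => S j ≤ t ∧ t < S j + p j).card := by
        rw [← Finset.add_sum_erase _ _ (Finset.mem_univ l), hl0, zero_add]
      have hsplit2 : ∑ j ∈ Finset.univ.erase l, p j = ∑ j, p j - p l := by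
        have := Finset.add_sum_erase Finset.univ p (Finset.mem_univ l)
        omega
      rw [hsplit, ← hsplit2]
      exact Finset.sum_le_sum (fun j _ => hle j)
    have hplsum : p l ≤ ∑ j, p j :=
      Finset.single_le_sum (f := p) (fun j _ => Nat.zero_le _) (Finset.mem_univ l)
    omega
  have hms : m * makespan p S = m * S l + m * p l := by
    rw [← hl, Nat.mul_add]
  have hm1 : m * p l = (m - 1) * p l + p l := by
    cases m with
    | zero => omega
    | succ k => simp [Nat.succ_sub_one, Nat.succ_mul]
  omega
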